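/- Let H, k₁, k₂, k₃, k₄ : [0,∞) → [0,∞) with lim_{t→∞} kᵢ(t) = 0 for i = 1,2, lim_{t→∞} H(t) = ∞, lim_{t→∞} k₃(t)/k₁(t) = 1 and lim_{t→∞} k₄(t)/k₂(t) = 1. Let Q(t; s₁, s₂) be a function on [0,∞) × [0,1]² that is nonincreasing in s₁ and in s₂. Suppose that for all λ₁, λ₂ ≥ 0, lim_{t→∞} H(t) Q(t; 1 - λ₁ k₁(t), 1 - λ₂ k₂(t)) = h(λ₁, λ₂), where h is continuous in both arguments. Then for all λ₁, λ₂ ≥ 0, lim_{t→∞} H(t) Q(t; e^{-λ₁ k₃(t)}, e^{-λ₂ k₄(t)}) = h(λ₁, λ₂). -/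

import Mathlib

open Filter Set

private lemma LRed.key (δ l k x : ℝ) (hδ : 0 < δ) (hδ1 : δ < 1) (hl : 0 ≤ l) (hk : 0 ≤ k)
    (h5 : (1 - δ/2) * (l * k) ≤ x) (hxs : x ≤ δ/2) : (1 - δ) * l * k ≤ x * (1 - x) := by
  have hlk : 0 ≤ l * k := mul_nonneg hl hk
  have hx0 : 0 ≤ x := le_trans (by nlinarith) h5
  have hmm : (1 - δ/2) * (l * k) * (1 - δ/2) ≤ x * (1 - x) :=
    mul_le_mul h5 (by linarith) (by linarith) hx0
  nlinarith [mul_nonneg hlk (sq_nonneg δ)]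

private lemma LRed.exp_lo (x : ℝ) : 1 - x ≤ Real.exp (-x) := by
  have := Real.add_one_le_exp (-x); linarith

private lemma LRed.exp_hi (x : ℝ) (hx : 0 ≤ x) : Real.exp (-x) ≤ 1 - x * (1 - x) := by
  have h1 : x + 1 ≤ Real.exp x := Real.add_one_le_exp x
  have h2 : 0 < Real.exp (-x) := Real.exp_pos _
  have h3 : (x + 1) * Real.exp (-x) ≤ Real.exp x * Real.exp (-x) :=
    mul_le_mul_of_nonneg_right h1 h2.le
  rw [← Real.exp_add] at h3
  simp only [add_neg_cancel, Real.exp_zero] at h3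
  have h4 : 1 - x ≤ Real.exp (-x) := LRed.exp_lo x
  nlinarith

set_option maxHeartbeats 2000000 in
/-- Lemma (LRed): if `H(t)Q(t; 1-λ₁k₁(t), 1-λ₂k₂(t)) → h(λ₁,λ₂)` with `h` continuous,
`Q` nonincreasing in each of its last two arguments (on `[0,1]²`), `kᵢ → 0`, `H → ∞`,
and `k₃/k₁ → 1`, `k₄/k₂ → 1`, then
`H(t)Q(t; e^{-λ₁k₃(t)}, e^{-λ₂k₄(t)}) → h(λ₁,λ₂)` for all `λ₁, λ₂ ≥ 0`. -/
theorem LRed (H k₁ k₂ k₃ k₄ : ℝ → ℝ) (Q : ℝ → ℝ → ℝ → ℝ × ℝ) (h : ℝ → ℝ → ℝ × ℝ)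
    (hHnn : ∀ t, 0 ≤ H t)
    (hknn : ∀ t, 0 ≤ k₁ t ∧ 0 ≤ k₂ t ∧ 0 ≤ k₃ t ∧ 0 ≤ k₄ t)
    (hk1 : Tendsto k₁ atTop (nhds 0)) (hk2 : Tendsto k₂ atTop (nhds 0))
    (hH : Tendsto H atTop atTop)
    (hk31 : Tendsto (fun t => k₃ t / k₁ t) atTop (nhds 1))
    (hk42 : Tendsto (fun t => k₄ t / k₂ t) atTop (nhds 1))
    (hmono : ∀ t, ∀ s₁ s₂ s₁' s₂' : ℝ, s₁ ∈ Set.Icc (0:ℝ) 1 → s₂ ∈ Set.Icc (0:ℝ) 1 →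
      s₁' ∈ Set.Icc (0:ℝ) 1 → s₂' ∈ Set.Icc (0:ℝ) 1 →
      s₁ ≤ s₁' → s₂ ≤ s₂' → Q t s₁' s₂' ≤ Q t s₁ s₂)
    (hcont : Continuous fun p : ℝ × ℝ => h p.1 p.2)
    (hlim : ∀ l₁ l₂ : ℝ, 0 ≤ l₁ → 0 ≤ l₂ →
      Tendsto (fun t => H t • Q t (1 - l₁ * k₁ t) (1 - l₂ * k₂ t)) atTop (nhds (h l₁ l₂))) :
    ∀ l₁ l₂ : ℝ, 0 ≤ l₁ → 0 ≤ l₂ →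
      Tendsto (fun t => H t • Q t (Real.exp (-(l₁ * k₃ t))) (Real.exp (-(l₂ * k₄ t))))
        atTop (nhds (h l₁ l₂)) := by
  intro l₁ l₂ hl₁ hl₂
  rw [Metric.tendsto_nhds]
  intro ε hε
  set L := h l₁ l₂ with hLdef
  -- choose δ ∈ (0,1) via continuity of h
  have hcA : Tendsto (fun d : ℝ => h ((1-d)*l₁) ((1-d)*l₂)) (nhds 0) (nhds L) := by
    have hc : Continuous (fun d : ℝ => ((1-d)*l₁, (1-d)*l₂)) :=
      ((continuous_const.sub continuous_id).mul continuous_const).prodMk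
        ((continuous_const.sub continuous_id).mul continuous_const)
    have := (hcont.comp hc).tendsto 0
    simpa [Function.comp_def] using this
  have hcB : Tendsto (fun d : ℝ => h ((1+d)*l₁) ((1+d)*l₂)) (nhds 0) (nhds L) := by
    have hc : Continuous (fun d : ℝ => ((1+d)*l₁, (1+d)*l₂)) :=
      ((continuous_const.add continuous_id).mul continuous_const).prodMk
        ((continuous_const.add continuous_id).mul continuous_const)
    have := (hcont.comp hc).tendsto 0
    simpa [Function.comp_def] using this
  have hA' : ∀ᶠ d in nhds (0:ℝ), dist (h ((1-d)*l₁) ((1-d)*l₂)) L < ε/2 :=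
    Metric.tendsto_nhds.mp hcA (ε/2) (by positivity)
  have hB' : ∀ᶠ d in nhds (0:ℝ), dist (h ((1+d)*l₁) ((1+d)*l₂)) L < ε/2 :=
    Metric.tendsto_nhds.mp hcB (ε/2) (by positivity)
  have h1' : ∀ᶠ d in nhds (0:ℝ), d < 1 := eventually_lt_nhds one_pos
  have hex : ∃ d : ℝ, ((dist (h ((1-d)*l₁) ((1-d)*l₂)) L < ε/2 ∧
      dist (h ((1+d)*l₁) ((1+d)*l₂)) L < ε/2 ∧ d < 1) ∧ d ∈ Set.Ioi (0:ℝ)) := by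
    have := ((hA'.and (hB'.and h1')).filter_mono
      (nhdsWithin_le_nhds (s := Set.Ioi (0:ℝ)))).and
      (eventually_mem_nhdsWithin (s := Set.Ioi (0:ℝ)) (a := (0:ℝ)))
    exact this.exists
  obtain ⟨δ, ⟨hdA, hdB, hδ1⟩, hδpos⟩ := hex
  rw [Set.mem_Ioi] at hδpos
  have hδ1' : (0:ℝ) ≤ 1 - δ := by linarith
  -- scaled rates
  set a₁ := (1-δ)*l₁ with ha₁
  set a₂ := (1-δ)*l₂ with ha₂
  set b₁ := (1+δ)*l₁ with hb₁
  set b₂ := (1+δ)*l₂ with hb₂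
  have ha₁nn : 0 ≤ a₁ := mul_nonneg hδ1' hl₁
  have ha₂nn : 0 ≤ a₂ := mul_nonneg hδ1' hl₂
  have hb₁nn : 0 ≤ b₁ := mul_nonneg (by linarith) hl₁
  have hb₂nn : 0 ≤ b₂ := mul_nonneg (by linarith) hl₂
  have EA : ∀ᶠ t in atTop,
      dist (H t • Q t (1 - a₁ * k₁ t) (1 - a₂ * k₂ t)) (h a₁ a₂) < ε/2 :=
    Metric.tendsto_nhds.mp (hlim a₁ a₂ ha₁nn ha₂nn) (ε/2) (by positivity)
  have EB : ∀ᶠ t in atTop,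
      dist (H t • Q t (1 - b₁ * k₁ t) (1 - b₂ * k₂ t)) (h b₁ b₂) < ε/2 :=
    Metric.tendsto_nhds.mp (hlim b₁ b₂ hb₁nn hb₂nn) (ε/2) (by positivity)
  -- eventual positivity of k₁, k₂
  have hk1pos : ∀ᶠ t in atTop, 0 < k₁ t := by
    have := hk31.eventually (eventually_gt_nhds (show (1/2:ℝ) < 1 by norm_num))
    filter_upwards [this] with t ht
    rcases lt_or_eq_of_le (hknn t).1 with hp | hp
    · exact hp
    · exfalso; rw [← hp, div_zero] at ht; norm_num at ht
  have hk2pos : ∀ᶠ t in atTop, 0 < k₂ t := by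
    have := hk42.eventually (eventually_gt_nhds (show (1/2:ℝ) < 1 by norm_num))
    filter_upwards [this] with t ht
    rcases lt_or_eq_of_le (hknn t).2.1 with hp | hp
    · exact hp
    · exfalso; rw [← hp, div_zero] at ht; norm_num at ht
  -- ratio bounds
  have hrat1 : ∀ᶠ t in atTop, |k₃ t / k₁ t - 1| < δ/2 := by
    have := Metric.tendsto_nhds.mp hk31 (δ/2) (by positivity)
    simpa [Real.dist_eq] using this
  have hrat2 : ∀ᶠ t in atTop, |k₄ t / k₂ t - 1| < δ/2 := by
    have := Metric.tendsto_nhds.mp hk42 (δ/2) (by positivity)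
    simpa [Real.dist_eq] using this
  -- k₃, k₄ tend to 0
  have hk3 : Tendsto k₃ atTop (nhds 0) := by
    have hm : Tendsto (fun t => k₃ t / k₁ t * k₁ t) atTop (nhds 0) := by
      simpa using hk31.mul hk1
    refine hm.congr' ?_
    filter_upwards [hk1pos] with t ht
    exact div_mul_cancel₀ _ ht.ne'
  have hk4 : Tendsto k₄ atTop (nhds 0) := by
    have hm : Tendsto (fun t => k₄ t / k₂ t * k₂ t) atTop (nhds 0) := by
      simpa using hk42.mul hk2
    refine hm.congr' ?_
    filter_upwards [hk2pos] with t ht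
    exact div_mul_cancel₀ _ ht.ne'
  -- smallness conditions
  have hx1 : ∀ᶠ t in atTop, l₁ * k₃ t < δ/2 := by
    have : Tendsto (fun t => l₁ * k₃ t) atTop (nhds 0) := by simpa using hk3.const_mul l₁
    exact this.eventually (eventually_lt_nhds (by positivity))
  have hx2 : ∀ᶠ t in atTop, l₂ * k₄ t < δ/2 := by
    have : Tendsto (fun t => l₂ * k₄ t) atTop (nhds 0) := by simpa using hk4.const_mul l₂
    exact this.eventually (eventually_lt_nhds (by positivity))
  have hsm1 : ∀ᶠ t in atTop, b₁ * k₁ t < 1 := by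
    have : Tendsto (fun t => b₁ * k₁ t) atTop (nhds 0) := by simpa using hk1.const_mul b₁
    exact this.eventually (eventually_lt_nhds one_pos)
  have hsm2 : ∀ᶠ t in atTop, b₂ * k₂ t < 1 := by
    have : Tendsto (fun t => b₂ * k₂ t) atTop (nhds 0) := by simpa using hk2.const_mul b₂
    exact this.eventually (eventually_lt_nhds one_pos)
  -- main eventual estimate
  filter_upwards [EA, EB, hk1pos, hk2pos, hrat1, hrat2, hx1, hx2, hsm1, hsm2] with t
    hEA hEB hp1 hp2 hr1 hr2 hxs1 hxs2 hbs1 hbs2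
  obtain ⟨hk1t, hk2t, hk3t, hk4t⟩ := hknn t
  -- bounds on k₃, k₄ via the ratios
  have hr1' := abs_lt.mp hr1
  have hr2' := abs_lt.mp hr2
  have hk3eq : k₃ t = (k₃ t / k₁ t) * k₁ t := (div_mul_cancel₀ _ hp1.ne').symm
  have hk4eq : k₄ t = (k₄ t / k₂ t) * k₂ t := (div_mul_cancel₀ _ hp2.ne').symm
  have hk3lo : (1 - δ/2) * k₁ t ≤ k₃ t := by
    rw [hk3eq]; exact mul_le_mul_of_nonneg_right (by linarith [hr1'.1]) hk1t
  have hk3hi : k₃ t ≤ (1 + δ) * k₁ t := by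
    rw [hk3eq]
    exact mul_le_mul_of_nonneg_right (by linarith [hr1'.2]) hk1t
  have hk4lo : (1 - δ/2) * k₂ t ≤ k₄ t := by
    rw [hk4eq]; exact mul_le_mul_of_nonneg_right (by linarith [hr2'.1]) hk2t
  have hk4hi : k₄ t ≤ (1 + δ) * k₂ t := by
    rw [hk4eq]
    exact mul_le_mul_of_nonneg_right (by linarith [hr2'.2]) hk2t
  -- set up the four bracketing arguments
  set x₁ := l₁ * k₃ t with hx₁def
  set x₂ := l₂ * k₄ t with hx₂def
  have hx₁nn : 0 ≤ x₁ := mul_nonneg hl₁ hk3t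
  have hx₂nn : 0 ≤ x₂ := mul_nonneg hl₂ hk4t
  -- memberships in [0,1]
  have hb1k : 0 ≤ b₁ * k₁ t := mul_nonneg hb₁nn hk1t
  have hb2k : 0 ≤ b₂ * k₂ t := mul_nonneg hb₂nn hk2t
  have ha1k : 0 ≤ a₁ * k₁ t := mul_nonneg ha₁nn hk1t
  have ha2k : 0 ≤ a₂ * k₂ t := mul_nonneg ha₂nn hk2t
  have hab1 : a₁ ≤ b₁ := by
    rw [ha₁, hb₁]; exact mul_le_mul_of_nonneg_right (by linarith) hl₁
  have hab2 : a₂ ≤ b₂ := by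
    rw [ha₂, hb₂]; exact mul_le_mul_of_nonneg_right (by linarith) hl₂
  have ha1b1 : a₁ * k₁ t ≤ b₁ * k₁ t := mul_le_mul_of_nonneg_right hab1 hk1t
  have ha2b2 : a₂ * k₂ t ≤ b₂ * k₂ t := mul_le_mul_of_nonneg_right hab2 hk2t
  have mem_b1 : (1 - b₁ * k₁ t) ∈ Set.Icc (0:ℝ) 1 := ⟨by linarith, by linarith⟩
  have mem_b2 : (1 - b₂ * k₂ t) ∈ Set.Icc (0:ℝ) 1 := ⟨by linarith, by linarith⟩
  have mem_a1 : (1 - a₁ * k₁ t) ∈ Set.Icc (0:ℝ) 1 := ⟨by linarith, by linarith⟩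
  have mem_a2 : (1 - a₂ * k₂ t) ∈ Set.Icc (0:ℝ) 1 := ⟨by linarith, by linarith⟩
  have mem_e1 : Real.exp (-x₁) ∈ Set.Icc (0:ℝ) 1 :=
    ⟨(Real.exp_pos _).le, Real.exp_le_one_iff.mpr (by linarith)⟩
  have mem_e2 : Real.exp (-x₂) ∈ Set.Icc (0:ℝ) 1 :=
    ⟨(Real.exp_pos _).le, Real.exp_le_one_iff.mpr (by linarith)⟩
  -- bracketing inequalities
  have hx1b : x₁ ≤ b₁ * k₁ t := by
    calc x₁ ≤ l₁ * ((1+δ) * k₁ t) := mul_le_mul_of_nonneg_left hk3hi hl₁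
    _ = b₁ * k₁ t := by ring
  have hx2b : x₂ ≤ b₂ * k₂ t := by
    calc x₂ ≤ l₂ * ((1+δ) * k₂ t) := mul_le_mul_of_nonneg_left hk4hi hl₂
    _ = b₂ * k₂ t := by ring
  have hlow1 : 1 - b₁ * k₁ t ≤ Real.exp (-x₁) :=
    le_trans (by linarith) (LRed.exp_lo x₁)
  have hlow2 : 1 - b₂ * k₂ t ≤ Real.exp (-x₂) :=
    le_trans (by linarith) (LRed.exp_lo x₂)
  have hxa1 : a₁ * k₁ t ≤ x₁ * (1 - x₁) := by
    have h5 : (1 - δ/2) * (l₁ * k₁ t) ≤ x₁ := by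
      calc (1 - δ/2) * (l₁ * k₁ t) = l₁ * ((1 - δ/2) * k₁ t) := by ring
      _ ≤ x₁ := mul_le_mul_of_nonneg_left hk3lo hl₁
    have := LRed.key δ l₁ (k₁ t) x₁ hδpos hδ1 hl₁ hk1t h5 hxs1.le
    calc a₁ * k₁ t = (1 - δ) * l₁ * k₁ t := by rw [ha₁]
    _ ≤ x₁ * (1 - x₁) := this
  have hxa2 : a₂ * k₂ t ≤ x₂ * (1 - x₂) := by
    have h5 : (1 - δ/2) * (l₂ * k₂ t) ≤ x₂ := by
      calc (1 - δ/2) * (l₂ * k₂ t) = l₂ * ((1 - δ/2) * k₂ t) := by ring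
      _ ≤ x₂ := mul_le_mul_of_nonneg_left hk4lo hl₂
    have := LRed.key δ l₂ (k₂ t) x₂ hδpos hδ1 hl₂ hk2t h5 hxs2.le
    calc a₂ * k₂ t = (1 - δ) * l₂ * k₂ t := by rw [ha₂]
    _ ≤ x₂ * (1 - x₂) := this
  have hhigh1 : Real.exp (-x₁) ≤ 1 - a₁ * k₁ t :=
    le_trans (LRed.exp_hi x₁ hx₁nn) (by linarith)
  have hhigh2 : Real.exp (-x₂) ≤ 1 - a₂ * k₂ t :=
    le_trans (LRed.exp_hi x₂ hx₂nn) (by linarith)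
  -- monotonicity of Q
  have hQlow : Q t (1 - a₁ * k₁ t) (1 - a₂ * k₂ t) ≤ Q t (Real.exp (-x₁)) (Real.exp (-x₂)) :=
    hmono t _ _ _ _ mem_e1 mem_e2 mem_a1 mem_a2 hhigh1 hhigh2
  have hQhigh : Q t (Real.exp (-x₁)) (Real.exp (-x₂)) ≤ Q t (1 - b₁ * k₁ t) (1 - b₂ * k₂ t) :=
    hmono t _ _ _ _ mem_b1 mem_b2 mem_e1 mem_e2 hlow1 hlow2
  -- multiply by H t ≥ 0, coordinatewise
  rw [Prod.le_def] at hQlow hQhigh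
  set FA := H t • Q t (1 - a₁ * k₁ t) (1 - a₂ * k₂ t) with hFA
  set FB := H t • Q t (1 - b₁ * k₁ t) (1 - b₂ * k₂ t) with hFB
  set F := H t • Q t (Real.exp (-x₁)) (Real.exp (-x₂)) with hF
  have hF1 : FA.1 ≤ F.1 ∧ F.1 ≤ FB.1 := by
    constructor <;>
    · simp only [hFA, hFB, hF, Prod.smul_fst, smul_eq_mul]
      exact mul_le_mul_of_nonneg_left (by first | exact hQlow.1 | exact hQhigh.1) (hHnn t)
  have hF2 : FA.2 ≤ F.2 ∧ F.2 ≤ FB.2 := by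
    constructor <;>
    · simp only [hFA, hFB, hF, Prod.smul_snd, smul_eq_mul]
      exact mul_le_mul_of_nonneg_left (by first | exact hQlow.2 | exact hQhigh.2) (hHnn t)
  -- distance estimates
  rw [Prod.dist_eq] at hEA hEB hdA hdB ⊢
  simp only [Real.dist_eq, sup_lt_iff] at hEA hEB hdA hdB ⊢
  have e1 := abs_lt.mp hEA.1
  have e2 := abs_lt.mp hEA.2
  have e3 := abs_lt.mp hEB.1
  have e4 := abs_lt.mp hEB.2
  have d1 := abs_lt.mp hdA.1
  have d2 := abs_lt.mp hdA.2
  have d3 := abs_lt.mp hdB.1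
  have d4 := abs_lt.mp hdB.2
  constructor <;> rw [abs_lt] <;> constructor
  · linarith [hF1.1]
  · linarith [hF1.2]
  · linarith [hF2.1]
  · linarith [hF2.2]
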